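/- Let n, k ≥ 2, let f₁(x₁,…,xₙ) = (x₁^k, x₂, …, xₙ) be the canonical k-fold on (ℂⁿ,0), and let φ₁(x₁,…,xₙ) = (λx₁, x₂, …, xₙ) where λ = e^{2πi/k}. If ρ is a reflection on (ℂⁿ,0) such that f₁ ∘ ρ = f₁ as germs, then there exists j ∈ {1, …, k−1} such that ρ = φ₁^j as germs (i.e. ρ belongs to the cyclic group generated by φ₁). -/

import Mathlib

noncomputable section

open Filter Function

/-- ℂⁿ as the space of functions `Fin n → ℂ`. -/
abbrev Cn (n : ℕ) : Type := Fin n → ℂ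

/-- Equality of germs at 0 of maps (ℂⁿ,0) → (ℂⁿ,0). -/
def GermEq {n : ℕ} (f g : Cn n → Cn n) : Prop := f =ᶠ[nhds 0] g

/-- Germ at 0 of a holomorphic map (ℂⁿ,0) → (ℂⁿ,0): holomorphic on a
neighborhood of 0 and sending 0 to 0. -/
def IsHoloGerm {n : ℕ} (f : Cn n → Cn n) : Prop :=
  f 0 = 0 ∧ ∀ᶠ x in nhds (0 : Cn n), AnalyticAt ℂ f x

/-- Germ of biholomorphism on (ℂⁿ,0): holomorphic germ with invertible
derivative at 0. -/
def IsBiholGerm {n : ℕ} (h : Cn n → Cn n) : Prop :=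
  IsHoloGerm h ∧ IsUnit (fderiv ℂ h 0)

/-- φ has order exactly r as a germ at 0 (φ^[r] = id as germs, r minimal). -/
def HasOrderGerm {n : ℕ} (φ : Cn n → Cn n) (r : ℕ) : Prop :=
  GermEq (φ^[r]) id ∧ ∀ m : ℕ, 0 < m → m < r → ¬ GermEq (φ^[m]) id

/-- The fixed-point set of φ near 0 is a complex submanifold of codimension 1:
locally the zero set of a holomorphic submersion F : (ℂⁿ,0) → (ℂ,0). -/
def FixIsHypersurface {n : ℕ} (φ : Cn n → Cn n) : Prop :=
  ∃ F : Cn n → ℂ, F 0 = 0 ∧ AnalyticAt ℂ F 0 ∧ fderiv ℂ F 0 ≠ 0 ∧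
    ∀ᶠ x in nhds (0 : Cn n), (φ x = x ↔ F x = 0)

/-- A reflection on (ℂⁿ,0): germ of biholomorphism of finite order ≥ 2 whose
fixed-point set is a codimension-1 complex submanifold. -/
def IsReflection {n : ℕ} (φ : Cn n → Cn n) : Prop :=
  IsBiholGerm φ ∧ (∃ r : ℕ, 2 ≤ r ∧ HasOrderGerm φ r) ∧ FixIsHypersurface φ

/-- A reflection of order exactly k. -/
def IsReflectionOfOrder {n : ℕ} (φ : Cn n → Cn n) (k : ℕ) : Prop :=
  IsBiholGerm φ ∧ HasOrderGerm φ k ∧ FixIsHypersurface φ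

/-- The canonical k-fold f₁(x) = (x₁^k, x₂, …, xₙ). -/
def canonFold (n k : ℕ) : Cn n → Cn n := fun x i => if (i : ℕ) = 0 then x i ^ k else x i

/-- The canonical reflection φ₁(x) = (λ x₁, x₂, …, xₙ) with λ = e^{2πi/k}. -/
def canonRefl (n k : ℕ) : Cn n → Cn n :=
  fun x i => if (i : ℕ) = 0 then Complex.exp (2 * (Real.pi : ℂ) * Complex.I / (k : ℂ)) * x i
    else x i

/-- f is a k-fold: a holomorphic germ 𝒜-equivalent to the canonical k-fold,
i.e. f = l ∘ f₁ ∘ h⁻¹ as germs for germs of biholomorphisms h, l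
(equivalently, f ∘ h = l ∘ f₁ as germs). -/
def IsKFold {n : ℕ} (k : ℕ) (f : Cn n → Cn n) : Prop :=
  IsHoloGerm f ∧ ∃ h l : Cn n → Cn n, IsBiholGerm h ∧ IsBiholGerm l ∧
    GermEq (f ∘ h) (l ∘ canonFold n k)

/-- The canonical k-fold in the i-th coordinate: fᵢ(x) = (x₁, …, xᵢ^k, …, xₙ). -/
def foldAt (n k : ℕ) (i : Fin n) : Cn n → Cn n := fun x j => if j = i then x j ^ k else x j

/-- A continuous function on a preconnected set with values in the k-th roots of
unity is constant. -/
lemma const_of_pow_eq_one {α : Type*} [TopologicalSpace α] {k : ℕ} (hk : k ≠ 0)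
    {s : Set α} (hs : IsPreconnected s) {q : α → ℂ} (hq : ContinuousOn q s)
    (hroot : ∀ x ∈ s, q x ^ k = 1) {x y : α} (hx : x ∈ s) (hy : y ∈ s) : q x = q y := by
  classical
  have hfin : Set.Finite {z : ℂ | z ^ k = 1} := by
    have hsub : {z : ℂ | z ^ k = 1} ⊆ (Polynomial.nthRootsFinset k (1 : ℂ) : Set ℂ) := fun z hz =>
      (Polynomial.mem_nthRootsFinset (Nat.pos_of_ne_zero hk) (1 : ℂ)).mpr hz
    exact Set.Finite.subset (Polynomial.nthRootsFinset k (1 : ℂ)).finite_toSet hsub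
  haveI : Finite {z : ℂ | z ^ k = 1} := hfin.to_subtype
  haveI : DiscreteTopology {z : ℂ | z ^ k = 1} := Finite.instDiscreteTopology
  set f : α → {z : ℂ | z ^ k = 1} := fun x =>
    if h : q x ^ k = 1 then ⟨q x, h⟩ else ⟨1, one_pow k⟩ with hf
  have hfc : ContinuousOn f s := by
    rw [continuousOn_iff_continuous_restrict] at hq ⊢
    have hrestr : Set.domRestrict s f =
        fun x : s => (⟨q x, hroot x x.2⟩ : {z : ℂ | z ^ k = 1}) := by
      funext z
      simp only [Set.domRestrict, hf, dif_pos (hroot z z.2)]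
    rw [hrestr]
    exact Continuous.subtype_mk hq _
  have hcst := hs.constant hfc hx hy
  have e1 : (f x : ℂ) = q x := by simp only [hf, dif_pos (hroot x hx)]
  have e2 : (f y : ℂ) = q y := by simp only [hf, dif_pos (hroot y hy)]
  rw [← e1, ← e2, hcst]

/-- Lemma 2.4: any reflection associated with the canonical k-fold
f₁ belongs to the cyclic group generated by the canonical reflection φ₁. -/
theorem stmt_0 (n k : ℕ) (hn : 2 ≤ n) (hk : 2 ≤ k)
    (ρ : Cn n → Cn n) (hρ : IsReflection ρ)
    (hassoc : GermEq (canonFold n k ∘ ρ) (canonFold n k)) :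
    ∃ j : ℕ, 1 ≤ j ∧ j ≤ k - 1 ∧ GermEq ρ ((canonRefl n k)^[j]) := by
  classical
  obtain ⟨⟨⟨hρ0, hρan⟩, _⟩, ⟨r, hr2, hord⟩, _⟩ := hρ
  have hk0 : k ≠ 0 := by omega
  haveI : NeZero k := ⟨hk0⟩
  set i0 : Fin n := ⟨0, by omega⟩ with hi0
  have hEv : ∀ᶠ x in nhds (0 : Cn n),
      AnalyticAt ℂ ρ x ∧ (canonFold n k ∘ ρ) x = canonFold n k x := hρan.and hassoc
  rw [Metric.eventually_nhds_iff_ball] at hEv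
  obtain ⟨ε, hε, hball⟩ := hEv
  set U : Set (Cn n) := Metric.ball (0 : Cn n) ε with hUdef
  have hU : U ∈ nhds (0 : Cn n) := Metric.ball_mem_nhds _ hε
  -- basic consequences of hassoc on U
  have hA : ∀ x ∈ U, (ρ x i0) ^ k = (x i0) ^ k := by
    intro x hx
    have h := congrFun (hball x hx).2 i0
    simpa [canonFold, Function.comp, hi0] using h
  have hB : ∀ x ∈ U, ∀ i : Fin n, (i : ℕ) ≠ 0 → ρ x i = x i := by
    intro x hx i hi
    have h := congrFun (hball x hx).2 i
    simpa [canonFold, Function.comp, hi] using h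
  -- q is the ratio of first coordinates
  set q : Cn n → ℂ := fun x => ρ x i0 / x i0 with hq
  have hcont : ContinuousOn (fun x => ρ x i0) U := fun x hx =>
    (((continuous_apply i0).continuousAt).comp (hball x hx).1.continuousAt).continuousWithinAt
  set S : Set (Cn n) := U ∩ {x | x i0 ≠ 0} with hSdef
  have hqcont : ContinuousOn q S :=
    ContinuousOn.div (hcont.mono Set.inter_subset_left)
      ((continuous_apply i0).continuousOn) (fun x hx => hx.2)
  have hqroot : ∀ x ∈ S, q x ^ k = 1 := by
    intro x hx
    rw [hq]
    simp only
    rw [div_pow, hA x hx.1, div_self (pow_ne_zero _ hx.2)]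
  -- S is preconnected: union of four convex pieces
  have hconv : ∀ t : Set ℂ, Convex ℝ t →
      IsPreconnected (U ∩ ((fun x : Cn n => x i0) ⁻¹' t)) := by
    intro t ht
    have : Convex ℝ (U ∩ ((fun x : Cn n => x i0) ⁻¹' t)) := by
      refine (convex_ball _ _).inter ?_
      exact ht.linear_preimage ((LinearMap.proj i0 : Cn n →ₗ[ℂ] ℂ).restrictScalars ℝ)
    exact this.isPreconnected
  set S1 := U ∩ ((fun x : Cn n => x i0) ⁻¹' {z : ℂ | 0 < z.re}) with hS1
  set S2 := U ∩ ((fun x : Cn n => x i0) ⁻¹' {z : ℂ | 0 < z.im}) with hS2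
  set S3 := U ∩ ((fun x : Cn n => x i0) ⁻¹' {z : ℂ | z.re < 0}) with hS3
  set S4 := U ∩ ((fun x : Cn n => x i0) ⁻¹' {z : ℂ | z.im < 0}) with hS4
  set pt : ℂ → Cn n := fun w i => if (i : ℕ) = 0 then w else 0 with hpt
  have hptU : ∀ w : ℂ, ‖w‖ < ε → pt w ∈ U := by
    intro w hw
    rw [hUdef, mem_ball_zero_iff, pi_norm_lt_iff hε]
    intro i
    by_cases hi : (i : ℕ) = 0 <;> simp [hpt, hi, hw, hε]
  have hpti0 : ∀ w : ℂ, pt w i0 = w := by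
    intro w; simp [hpt, hi0]
  have habs : ∀ a b : ℝ, ‖(a : ℂ) + (b : ℂ) * Complex.I‖ ≤ |a| + |b| := by
    intro a b
    calc ‖(a : ℂ) + (b : ℂ) * Complex.I‖
        ≤ ‖(a : ℂ)‖ + ‖(b : ℂ) * Complex.I‖ := norm_add_le _ _
      _ = |a| + |b| := by simp
  have hε4 : |ε / 4| + |ε / 4| < ε := by
    rw [abs_of_pos (by linarith)]; linarith
  set w1 : ℂ := ((ε / 4 : ℝ) : ℂ) + ((ε / 4 : ℝ) : ℂ) * Complex.I with hw1
  set w2 : ℂ := ((-(ε / 4) : ℝ) : ℂ) + ((ε / 4 : ℝ) : ℂ) * Complex.I with hw2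
  set w3 : ℂ := ((ε / 4 : ℝ) : ℂ) + ((-(ε / 4) : ℝ) : ℂ) * Complex.I with hw3
  have hw1U : pt w1 ∈ U := hptU _ (lt_of_le_of_lt (habs _ _) (by simpa using hε4))
  have hw2U : pt w2 ∈ U := hptU _ (lt_of_le_of_lt (habs _ _) (by simpa using hε4))
  have hw3U : pt w3 ∈ U := hptU _ (lt_of_le_of_lt (habs _ _) (by simpa using hε4))
  have hεq : (0 : ℝ) < ε / 4 := by linarith
  have hw1re : (0 : ℝ) < w1.re := by simp [hw1]; linarith
  have hw1im : (0 : ℝ) < w1.im := by simp [hw1]; linarith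
  have hw2re : w2.re < 0 := by simp [hw2]; linarith
  have hw2im : (0 : ℝ) < w2.im := by simp [hw2]; linarith
  have hw3re : (0 : ℝ) < w3.re := by simp [hw3]; linarith
  have hw3im : w3.im < 0 := by simp [hw3]; linarith
  have h12 : IsPreconnected (S1 ∪ S2) := by
    refine IsPreconnected.union (pt w1) ⟨hw1U, ?_⟩ ⟨hw1U, ?_⟩
      (hconv _ (convex_halfSpace_re_gt 0)) (hconv _ (convex_halfSpace_im_gt 0))
    · simpa [Set.mem_preimage, hpti0] using hw1re
    · simpa [Set.mem_preimage, hpti0] using hw1im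
  have h123 : IsPreconnected (S1 ∪ S2 ∪ S3) := by
    refine IsPreconnected.union (pt w2) (Or.inr ⟨hw2U, ?_⟩) ⟨hw2U, ?_⟩
      h12 (hconv _ (convex_halfSpace_re_lt 0))
    · simpa [Set.mem_preimage, hpti0] using hw2im
    · simpa [Set.mem_preimage, hpti0] using hw2re
  have hSpre : IsPreconnected (S1 ∪ S2 ∪ S3 ∪ S4) := by
    refine IsPreconnected.union (pt w3) (Or.inl (Or.inl ⟨hw3U, ?_⟩)) ⟨hw3U, ?_⟩
      h123 (hconv _ (convex_halfSpace_im_lt 0))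
    · simpa [Set.mem_preimage, hpti0] using hw3re
    · simpa [Set.mem_preimage, hpti0] using hw3im
  have hSeq : S1 ∪ S2 ∪ S3 ∪ S4 = S := by
    ext x
    constructor
    · rintro (((⟨hxU, hx⟩ | ⟨hxU, hx⟩) | ⟨hxU, hx⟩) | ⟨hxU, hx⟩) <;>
        refine ⟨hxU, fun h0 => ?_⟩ <;>
        · simp only [Set.mem_preimage, Set.mem_setOf_eq, h0] at hx
          simp at hx
    · rintro ⟨hxU, hx0⟩
      rcases lt_trichotomy (x i0).re 0 with h | h | h
      · exact Or.inl (Or.inr ⟨hxU, h⟩)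
      · rcases lt_trichotomy (x i0).im 0 with h' | h' | h'
        · exact Or.inr ⟨hxU, h'⟩
        · exact absurd (Complex.ext h h') hx0
        · exact Or.inl (Or.inl (Or.inr ⟨hxU, h'⟩))
      · exact Or.inl (Or.inl (Or.inl ⟨hxU, h⟩))
  rw [hSeq] at hSpre
  -- the constant value c
  have hw1S : pt w1 ∈ S := by
    refine ⟨hw1U, ?_⟩
    rw [Set.mem_setOf_eq, hpti0]
    intro h; rw [h] at hw1re; simp at hw1re
  set c : ℂ := q (pt w1) with hc
  have hck : c ^ k = 1 := hqroot _ hw1S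
  have hqc : ∀ x ∈ S, q x = c :=
    fun x hx => const_of_pow_eq_one hk0 hSpre hqcont hqroot hx hw1S
  have hkey : ∀ x ∈ U, ρ x i0 = c * x i0 := by
    intro x hx
    by_cases hx0 : x i0 = 0
    · have h := hA x hx
      rw [hx0, zero_pow hk0, pow_eq_zero_iff hk0] at h
      rw [h, hx0, mul_zero]
    · have h := hqc x ⟨hx, hx0⟩
      rw [hq] at h
      simp only at h
      rw [div_eq_iff hx0] at h
      exact h
  -- c is a power of the primitive root
  obtain ⟨j, hjk, hjc⟩ :=
    (Complex.isPrimitiveRoot_exp k hk0).eq_pow_of_pow_eq_one hck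
  rcases Nat.eq_zero_or_pos j with hj0 | hj1
  · exfalso
    have hc1 : c = 1 := by rw [← hjc, hj0, pow_zero]
    have hid : GermEq (ρ^[1]) id := by
      rw [Function.iterate_one]
      filter_upwards [hU] with x hx
      funext i
      by_cases hi : (i : ℕ) = 0
      · have hii : i = i0 := Fin.ext (by simp [hi, hi0])
        rw [hii, hkey x hx, hc1, one_mul, id]
      · rw [hB x hx i hi, id]
    exact hord.2 1 one_pos (by omega) hid
  · refine ⟨j, hj1, by omega, ?_⟩
    have hiter : ∀ (m : ℕ) (x : Cn n) (i : Fin n), (canonRefl n k)^[m] x i =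
        if (i : ℕ) = 0 then
          (Complex.exp (2 * (Real.pi : ℂ) * Complex.I / (k : ℂ))) ^ m * x i
        else x i := by
      intro m
      induction m with
      | zero => intro x i; by_cases hi : (i : ℕ) = 0 <;> simp [hi]
      | succ m ih =>
        intro x i
        rw [Function.iterate_succ_apply, ih]
        by_cases hi : (i : ℕ) = 0
        · rw [if_pos hi]
          simp only [canonRefl, if_pos hi]
          rw [pow_succ]; ring
        · rw [if_neg hi]
          simp only [canonRefl, if_neg hi]
    filter_upwards [hU] with x hx
    funext i
    rw [hiter]
    by_cases hi : (i : ℕ) = 0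
    · rw [if_pos hi]
      have hii : i = i0 := Fin.ext (by simp [hi, hi0])
      rw [hii, hkey x hx, hjc]
    · rw [if_neg hi]
      exact hB x hx i hi
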